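/- Let B_{jk} : ℝ^N → ℝ be bounded continuous functions with B_{jk} = −B_{kj}, and fix z ∈ ℝ^N. For ℏ ∈ (0,1] and x, y ∈ ℝ^N set φ_ℏ(z;x,y) := e^{-(i/ℏ) Γ^B⟨z, z + √ℏ x, z + √ℏ (x−y)⟩}. Then, locally uniformly in (x,y) ∈ ℝ^N × ℝ^N, one has lim_{ℏ→0⁺} φ_ℏ(z;x,y) = exp( (i/2) Σ_{j,k} x_j y_k B_{jk}(z) ), and also lim_{ℏ→0⁺} φ_ℏ(z;x,√ℏ y) = 1. -/

import Mathlib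

open MeasureTheory Filter Topology Real

noncomputable section

abbrev Vec (N : ℕ) := Fin N → ℝ

/-- Circulation `Γ^A[x,y]` of the vector potential `A` along the segment from `x` to `y`. -/
def circA {N : ℕ} (A : Vec N → Vec N) (x y : Vec N) : ℝ :=
  ∫ s in (0:ℝ)..1, ∑ j, (y j - x j) * A (x + s • (y - x)) j

/-- Flux `Γ^B⟨a,b,c⟩` of the magnetic field `B` through the triangle with vertices
`a`, `b`, `c`, given by the standard parametrization. -/
def fluxB {N : ℕ} (B : Fin N → Fin N → Vec N → ℝ) (a b c : Vec N) : ℝ :=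
  ∑ j, ∑ k, (b j - a j) * (c k - b k) *
    ∫ μ in (0:ℝ)..1, ∫ ν in (0:ℝ)..1, μ * B j k (a + μ • (b - a) + (μ * ν) • (c - b))


def Jint {N : ℕ} (f : Vec N → ℝ) (a u v : Vec N) : ℝ :=
  ∫ μ in (0:ℝ)..1, ∫ ν in (0:ℝ)..1, μ * f (a + μ • u + (μ * ν) • v)

lemma Jint_bound {N : ℕ} (f : Vec N → ℝ) (a u v : Vec N) (C : ℝ)
    (hf : ∀ μ ν : ℝ, μ ∈ Set.Icc (0:ℝ) 1 → ν ∈ Set.Icc (0:ℝ) 1 →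
      |f (a + μ • u + (μ * ν) • v)| ≤ C) :
    |Jint f a u v| ≤ C := by
  have huIoc : Set.uIoc (0:ℝ) 1 ⊆ Set.Icc 0 1 := by
    rw [Set.uIoc_of_le (by norm_num : (0:ℝ) ≤ 1)]
    exact Set.Ioc_subset_Icc_self
  have key : ∀ μ ∈ Set.uIoc (0:ℝ) 1,
      ‖∫ ν in (0:ℝ)..1, μ * f (a + μ • u + (μ * ν) • v)‖ ≤ C := by
    intro μ hμ
    have hμ' := huIoc hμ
    have : ∀ ν ∈ Set.uIoc (0:ℝ) 1, ‖μ * f (a + μ • u + (μ * ν) • v)‖ ≤ C := by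
      intro ν hν
      have hν' := huIoc hν
      have h1 : |μ| ≤ 1 := abs_le.2 ⟨by linarith [hμ'.1], hμ'.2⟩
      calc ‖μ * f (a + μ • u + (μ * ν) • v)‖ = |μ| * |f (a + μ • u + (μ * ν) • v)| :=
            abs_mul _ _
        _ ≤ 1 * C := mul_le_mul h1 (hf μ ν hμ' hν') (abs_nonneg _) zero_le_one
        _ = C := one_mul C
    calc ‖∫ ν in (0:ℝ)..1, μ * f (a + μ • u + (μ * ν) • v)‖ ≤ C * |1 - 0| :=
          intervalIntegral.norm_integral_le_of_norm_le_const this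
      _ = C := by norm_num
  calc |Jint f a u v| ≤ C * |1 - 0| :=
        intervalIntegral.norm_integral_le_of_norm_le_const key
    _ = C := by norm_num

lemma Jint_sub {N : ℕ} (f : Vec N → ℝ) (hf : Continuous f) (a u v : Vec N) :
    Jint f a u v - f a / 2 = Jint (fun w => f w - f a) a u v := by
  have harg : Continuous (fun q : ℝ × ℝ => a + q.1 • u + (q.1 * q.2) • v) := by fun_prop
  have hcont : Continuous (fun q : ℝ × ℝ => q.1 * f (a + q.1 • u + (q.1 * q.2) • v)) := by
    fun_prop
  have hinner : ∀ μ : ℝ, (∫ ν in (0:ℝ)..1, μ * (f (a + μ • u + (μ * ν) • v) - f a)) =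
      (∫ ν in (0:ℝ)..1, μ * f (a + μ • u + (μ * ν) • v)) - μ * f a := by
    intro μ
    have h1 : IntervalIntegrable (fun ν => μ * f (a + μ • u + (μ * ν) • v))
        volume 0 1 := by
      apply Continuous.intervalIntegrable; fun_prop
    have h2 : IntervalIntegrable (fun _ : ℝ => μ * f a) volume 0 1 :=
      intervalIntegrable_const
    have : (fun ν : ℝ => μ * (f (a + μ • u + (μ * ν) • v) - f a)) =
        fun ν : ℝ => μ * f (a + μ • u + (μ * ν) • v) - μ * f a := by
      funext ν; ring
    rw [this, intervalIntegral.integral_sub h1 h2, intervalIntegral.integral_const]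
    simp
  have hg : Continuous (fun μ : ℝ => ∫ ν in (0:ℝ)..1, μ * f (a + μ • u + (μ * ν) • v)) := by
    exact intervalIntegral.continuous_parametric_intervalIntegral_of_continuous'
      (f := fun μ ν => μ * f (a + μ • u + (μ * ν) • v)) hcont 0 1
  unfold Jint
  have : (fun μ : ℝ => ∫ ν in (0:ℝ)..1, μ * (f (a + μ • u + (μ * ν) • v) - f a)) =
      fun μ : ℝ => (∫ ν in (0:ℝ)..1, μ * f (a + μ • u + (μ * ν) • v)) - μ * f a := by
    funext μ; exact hinner μ
  rw [this, intervalIntegral.integral_sub (hg.intervalIntegrable 0 1)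
    (by apply Continuous.intervalIntegrable; fun_prop)]
  have : (∫ μ in (0:ℝ)..1, μ * f a) = f a / 2 := by
    rw [intervalIntegral.integral_mul_const, integral_id]
    ring
  rw [this]

lemma exp_I_dist (s t : ℝ) (h : |s - t| ≤ 1) :
    dist (Complex.exp ((s:ℂ) * Complex.I)) (Complex.exp ((t:ℂ) * Complex.I)) ≤ 2 * |s - t| := by
  have hfac : Complex.exp ((s:ℂ) * Complex.I) - Complex.exp ((t:ℂ) * Complex.I) =
      Complex.exp ((t:ℂ) * Complex.I) * (Complex.exp (((s - t : ℝ) : ℂ) * Complex.I) - 1) := by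
    rw [mul_sub, ← Complex.exp_add, mul_one]
    push_cast
    ring_nf
  rw [Complex.dist_eq, hfac, norm_mul, Complex.norm_exp_ofReal_mul_I, one_mul]
  have habs : ‖((s - t : ℝ) : ℂ) * Complex.I‖ = |s - t| := by
    rw [norm_mul, Complex.norm_I, mul_one, Complex.norm_real, Real.norm_eq_abs]
  have := Complex.norm_exp_sub_one_le (x := ((s - t : ℝ) : ℂ) * Complex.I) (by rw [habs]; exact h)
  rwa [habs] at this

lemma tuo_exp {α : Type*} {K : Set α} {F : ℝ → α → ℝ} {f : α → ℝ}
    (h : TendstoUniformlyOn F f (nhdsWithin 0 (Set.Ioi 0)) K) :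
    TendstoUniformlyOn (fun t p => Complex.exp ((F t p : ℂ) * Complex.I))
      (fun p => Complex.exp ((f p : ℂ) * Complex.I)) (nhdsWithin 0 (Set.Ioi 0)) K := by
  rw [Metric.tendstoUniformlyOn_iff] at h ⊢
  intro ε hε
  filter_upwards [h (min (ε / 2) 1) (lt_min (by linarith) one_pos)] with t ht p hp
  have hd := ht p hp
  have h1 : |f p - F t p| ≤ 1 := by
    rw [Real.dist_eq] at hd
    exact le_of_lt (lt_of_lt_of_le hd (min_le_right _ _))
  calc dist (Complex.exp ((f p : ℂ) * Complex.I)) (Complex.exp ((F t p : ℂ) * Complex.I))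
      ≤ 2 * |f p - F t p| := exp_I_dist _ _ h1
    _ < 2 * (ε / 2) := by
        have := lt_of_lt_of_le hd (min_le_left _ _)
        rw [Real.dist_eq] at this
        linarith
    _ = ε := by ring


lemma fluxB_eq_Jint {N : ℕ} (B : Fin N → Fin N → Vec N → ℝ) (a b c : Vec N) :
    fluxB B a b c = ∑ j, ∑ k, (b j - a j) * (c k - b k) * Jint (B j k) a (b - a) (c - b) :=
  rfl

lemma branch1 {N : ℕ} (B : Fin N → Fin N → Vec N → ℝ) (hBcont : ∀ j k, Continuous (B j k))
    (z : Vec N) (K : Set (Vec N × Vec N)) (hK : IsCompact K) :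
    TendstoUniformlyOn
      (fun (ℏ : ℝ) (p : Vec N × Vec N) =>
        -(fluxB B z (z + Real.sqrt ℏ • p.1) (z + Real.sqrt ℏ • (p.1 - p.2))) / ℏ)
      (fun p => (∑ j, ∑ k, p.1 j * p.2 k * B j k z) / 2) (𝓝[>] 0) K := by
  obtain ⟨R0, hR0⟩ := hK.isBounded.exists_norm_le
  set R : ℝ := max R0 0 with hRdef
  have hRnn : 0 ≤ R := le_max_right _ _
  have hR : ∀ p ∈ K, ‖p‖ ≤ R := fun p hp => le_trans (hR0 p hp) (le_max_left _ _)
  rw [Metric.tendstoUniformlyOn_iff]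
  intro ε hε
  set D : ℝ := (N : ℝ)^2 * R^2 with hDdef
  have hDnn : 0 ≤ D := by positivity
  set ε1 : ℝ := ε / (D + 1) with hε1def
  have hε1 : 0 < ε1 := by positivity
  -- continuity control function
  set Cf : Vec N → ℝ := fun w => ∑ j, ∑ k, |B j k w - B j k z| with hCfdef
  have hCfcont : Continuous Cf := by
    apply continuous_finset_sum
    intro j _
    apply continuous_finset_sum
    intro k _
    exact ((hBcont j k).sub continuous_const).abs
  have hCfz : Cf z = 0 := by simp [hCfdef]
  obtain ⟨δ, hδpos, hδ⟩ := Metric.continuousAt_iff.1 hCfcont.continuousAt ε1 hε1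
  have hterm : ∀ j k w, dist w z < δ → |B j k w - B j k z| ≤ ε1 := by
    intro j k w hw
    have h1 := hδ hw
    rw [Real.dist_eq, hCfz, sub_zero] at h1
    have h2 : |B j k w - B j k z| ≤ Cf w := by
      calc |B j k w - B j k z|
          ≤ ∑ k', |B j k' w - B j k' z| :=
            Finset.single_le_sum (f := fun k' => |B j k' w - B j k' z|)
              (fun k' _ => abs_nonneg _) (Finset.mem_univ k)
        _ ≤ Cf w :=
            Finset.single_le_sum (f := fun j' => ∑ k', |B j' k' w - B j' k' z|)
              (fun j' _ => Finset.sum_nonneg fun k' _ => abs_nonneg _) (Finset.mem_univ j)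
    have h3 : Cf w < ε1 := lt_of_abs_lt h1
    linarith
  set η : ℝ := min 1 ((δ / (2*R+2))^2) with hηdef
  have hηpos : 0 < η := lt_min one_pos (by positivity)
  filter_upwards [Ioo_mem_nhdsGT hηpos] with ℏ hℏ p hp
  obtain ⟨hℏpos, hℏlt⟩ := hℏ
  have hsq : Real.sqrt ℏ * Real.sqrt ℏ = ℏ := Real.mul_self_sqrt hℏpos.le
  have hsqlt : Real.sqrt ℏ < δ / (2*R+2) := by
    have h1 : ℏ < (δ / (2*R+2))^2 := lt_of_lt_of_le hℏlt (min_le_right _ _)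
    have h2 : Real.sqrt ℏ < Real.sqrt ((δ / (2*R+2))^2) := Real.sqrt_lt_sqrt hℏpos.le h1
    rwa [Real.sqrt_sq (by positivity)] at h2
  have hx : ‖p.1‖ ≤ R := le_trans (norm_fst_le p) (hR p hp)
  have hy : ‖p.2‖ ≤ R := le_trans (norm_snd_le p) (hR p hp)
  set s : ℝ := Real.sqrt ℏ with hsdef
  have hsnn : 0 ≤ s := Real.sqrt_nonneg _
  -- rewrite flux
  have hu : (z + s • p.1) - z = s • p.1 := by module
  have hv : (z + s • (p.1 - p.2)) - (z + s • p.1) = -(s • p.2) := by module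
  have hflux : fluxB B z (z + s • p.1) (z + s • (p.1 - p.2)) =
      ∑ j, ∑ k, (s * p.1 j) * (-(s * p.2 k)) * Jint (B j k) z (s • p.1) (-(s • p.2)) := by
    rw [fluxB_eq_Jint, hu, hv]
    refine Finset.sum_congr rfl fun j _ => Finset.sum_congr rfl fun k _ => ?_
    congr 1
    · congr 1
      · simp
      · simp [mul_sub]
  have hφ : -(fluxB B z (z + s • p.1) (z + s • (p.1 - p.2))) / ℏ =
      ∑ j, ∑ k, p.1 j * p.2 k * Jint (B j k) z (s • p.1) (-(s • p.2)) := by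
    rw [hflux]
    have key : (∑ j, ∑ k, (s * p.1 j) * (-(s * p.2 k)) * Jint (B j k) z (s • p.1) (-(s • p.2)))
        = -(ℏ * ∑ j, ∑ k, p.1 j * p.2 k * Jint (B j k) z (s • p.1) (-(s • p.2))) := by
      rw [Finset.mul_sum, ← Finset.sum_neg_distrib]
      refine Finset.sum_congr rfl fun j _ => ?_
      rw [Finset.mul_sum, ← Finset.sum_neg_distrib]
      refine Finset.sum_congr rfl fun k _ => ?_
      linear_combination (-(p.1 j * p.2 k * Jint (B j k) z (s • p.1) (-(s • p.2)))) * hsq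
    rw [key]
    field_simp
  rw [Real.dist_eq, hφ]
  -- per-term estimate
  have hJ : ∀ j k, |B j k z / 2 - Jint (B j k) z (s • p.1) (-(s • p.2))| ≤ ε1 := by
    intro j k
    rw [abs_sub_comm, Jint_sub (B j k) (hBcont j k) z (s • p.1) (-(s • p.2))]
    apply Jint_bound
    intro μ ν hμ hν
    apply hterm
    have harg : dist (z + μ • (s • p.1) + (μ * ν) • (-(s • p.2))) z
        = ‖μ • (s • p.1) + (μ * ν) • (-(s • p.2))‖ := by
      rw [dist_eq_norm]
      congr 1
      module
    rw [harg]
    calc ‖μ • (s • p.1) + (μ * ν) • (-(s • p.2))‖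
        ≤ ‖μ • (s • p.1)‖ + ‖(μ * ν) • (-(s • p.2))‖ := norm_add_le _ _
      _ = |μ| * (s * ‖p.1‖) + |μ| * |ν| * (s * ‖p.2‖) := by
          simp [norm_smul, Real.norm_eq_abs, abs_of_nonneg hsnn, abs_mul]
      _ ≤ 1 * (s * R) + 1 * (s * R) := by
          have h1 : |μ| ≤ 1 := abs_le.2 ⟨by linarith [hμ.1], hμ.2⟩
          have h2 : |μ| * |ν| ≤ 1 :=
            mul_le_one₀ h1 (abs_nonneg _) (abs_le.2 ⟨by linarith [hν.1], hν.2⟩)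
          have h3 : s * ‖p.1‖ ≤ s * R := mul_le_mul_of_nonneg_left hx hsnn
          have h4 : s * ‖p.2‖ ≤ s * R := mul_le_mul_of_nonneg_left hy hsnn
          exact add_le_add (mul_le_mul h1 h3 (by positivity) zero_le_one)
            (mul_le_mul h2 h4 (by positivity) zero_le_one)
      _ = s * (2*R) := by ring
      _ < δ := by
          have : s * (2*R+2) < δ := by
            rw [← lt_div_iff₀ (by positivity : (0:ℝ) < 2*R+2)]
            exact hsqlt
          nlinarith [hsnn]
  -- sum estimate
  have hsum : |(∑ j, ∑ k, p.1 j * p.2 k * B j k z) / 2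
      - ∑ j, ∑ k, p.1 j * p.2 k * Jint (B j k) z (s • p.1) (-(s • p.2))| ≤ D * ε1 := by
    have hre : (∑ j, ∑ k, p.1 j * p.2 k * B j k z) / 2
        - (∑ j, ∑ k, p.1 j * p.2 k * Jint (B j k) z (s • p.1) (-(s • p.2)))
        = ∑ j, ∑ k, p.1 j * p.2 k *
            (B j k z / 2 - Jint (B j k) z (s • p.1) (-(s • p.2))) := by
      rw [Finset.sum_div, ← Finset.sum_sub_distrib]
      refine Finset.sum_congr rfl fun j _ => ?_
      rw [Finset.sum_div, ← Finset.sum_sub_distrib]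
      refine Finset.sum_congr rfl fun k _ => ?_
      ring
    rw [hre]
    calc |∑ j, ∑ k, p.1 j * p.2 k * (B j k z / 2 - Jint (B j k) z (s • p.1) (-(s • p.2)))|
        ≤ ∑ j, ∑ k, |p.1 j * p.2 k * (B j k z / 2 - Jint (B j k) z (s • p.1) (-(s • p.2)))| := by
          refine le_trans (Finset.abs_sum_le_sum_abs _ _) ?_
          exact Finset.sum_le_sum fun j _ => Finset.abs_sum_le_sum_abs _ _
      _ ≤ ∑ _j : Fin N, ∑ _k : Fin N, R * R * ε1 := by
          refine Finset.sum_le_sum fun j _ => Finset.sum_le_sum fun k _ => ?_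
          rw [abs_mul, abs_mul]
          have h1 : |p.1 j| ≤ R := le_trans (norm_le_pi_norm p.1 j) hx
          have h2 : |p.2 k| ≤ R := le_trans (norm_le_pi_norm p.2 k) hy
          have h3 := hJ j k
          exact mul_le_mul (mul_le_mul h1 h2 (abs_nonneg _) hRnn) h3 (abs_nonneg _)
            (by positivity)
      _ = D * ε1 := by
          simp only [Finset.sum_const, Finset.card_univ, Fintype.card_fin, nsmul_eq_mul, hDdef]
          ring
  calc |(∑ j, ∑ k, p.1 j * p.2 k * B j k z) / 2
      - ∑ j, ∑ k, p.1 j * p.2 k * Jint (B j k) z (s • p.1) (-(s • p.2))| ≤ D * ε1 := hsum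
    _ < (D + 1) * ε1 := mul_lt_mul_of_pos_right (lt_add_one D) hε1
    _ = ε := by
        rw [hε1def]
        field_simp

lemma branch2 {N : ℕ} (B : Fin N → Fin N → Vec N → ℝ)
    (hBbound : ∀ j k, ∃ C : ℝ, ∀ x, |B j k x| ≤ C)
    (z : Vec N) (K : Set (Vec N × Vec N)) (hK : IsCompact K) :
    TendstoUniformlyOn
      (fun (ℏ : ℝ) (p : Vec N × Vec N) =>
        -(fluxB B z (z + Real.sqrt ℏ • p.1) (z + Real.sqrt ℏ • (p.1 - Real.sqrt ℏ • p.2))) / ℏ)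
      (fun _ => (0:ℝ)) (𝓝[>] 0) K := by
  obtain ⟨R0, hR0⟩ := hK.isBounded.exists_norm_le
  set R : ℝ := max R0 0 with hRdef
  have hRnn : 0 ≤ R := le_max_right _ _
  have hR : ∀ p ∈ K, ‖p‖ ≤ R := fun p hp => le_trans (hR0 p hp) (le_max_left _ _)
  choose C hC using hBbound
  have hCnn : ∀ j k, 0 ≤ C j k := fun j k => le_trans (abs_nonneg _) (hC j k z)
  set D : ℝ := R^2 * ∑ j, ∑ k, C j k with hDdef
  have hDnn : 0 ≤ D := by
    apply mul_nonneg (by positivity)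
    exact Finset.sum_nonneg fun j _ => Finset.sum_nonneg fun k _ => hCnn j k
  rw [Metric.tendstoUniformlyOn_iff]
  intro ε hε
  set η : ℝ := min 1 ((ε / (D+1))^2) with hηdef
  have hηpos : 0 < η := lt_min one_pos (by positivity)
  filter_upwards [Ioo_mem_nhdsGT hηpos] with ℏ hℏ p hp
  obtain ⟨hℏpos, hℏlt⟩ := hℏ
  set s : ℝ := Real.sqrt ℏ with hsdef
  have hsq : s * s = ℏ := Real.mul_self_sqrt hℏpos.le
  have hsnn : 0 ≤ s := Real.sqrt_nonneg _
  have hslt : s < ε / (D+1) := by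
    have h1 : ℏ < (ε / (D+1))^2 := lt_of_lt_of_le hℏlt (min_le_right _ _)
    have h2 : Real.sqrt ℏ < Real.sqrt ((ε / (D+1))^2) := Real.sqrt_lt_sqrt hℏpos.le h1
    rwa [Real.sqrt_sq (by positivity)] at h2
  have hx : ‖p.1‖ ≤ R := le_trans (norm_fst_le p) (hR p hp)
  have hy : ‖p.2‖ ≤ R := le_trans (norm_snd_le p) (hR p hp)
  have hu : (z + s • p.1) - z = s • p.1 := by module
  have hv : (z + s • (p.1 - s • p.2)) - (z + s • p.1) = -((s*s) • p.2) := by module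
  have hflux : fluxB B z (z + s • p.1) (z + s • (p.1 - s • p.2)) =
      ∑ j, ∑ k, (s * p.1 j) * (-(s * (s * p.2 k))) *
        Jint (B j k) z (s • p.1) (-((s*s) • p.2)) := by
    rw [fluxB_eq_Jint, hu, hv]
    refine Finset.sum_congr rfl fun j _ => Finset.sum_congr rfl fun k _ => ?_
    congr 1
    · congr 1
      · simp
      · simp [mul_sub]
  have hφ : -(fluxB B z (z + s • p.1) (z + s • (p.1 - s • p.2))) / ℏ =
      s * ∑ j, ∑ k, p.1 j * p.2 k * Jint (B j k) z (s • p.1) (-((s*s) • p.2)) := by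
    rw [hflux]
    have key : (∑ j, ∑ k, (s * p.1 j) * (-(s * (s * p.2 k))) *
          Jint (B j k) z (s • p.1) (-((s*s) • p.2)))
        = -(ℏ * (s * ∑ j, ∑ k, p.1 j * p.2 k *
            Jint (B j k) z (s • p.1) (-((s*s) • p.2)))) := by
      rw [Finset.mul_sum, Finset.mul_sum, ← Finset.sum_neg_distrib]
      refine Finset.sum_congr rfl fun j _ => ?_
      rw [Finset.mul_sum, Finset.mul_sum, ← Finset.sum_neg_distrib]
      refine Finset.sum_congr rfl fun k _ => ?_
      linear_combination
        (-(s * p.1 j * p.2 k * Jint (B j k) z (s • p.1) (-((s*s) • p.2)))) * hsq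
    rw [key]
    field_simp
  rw [Real.dist_eq, hφ, zero_sub, abs_neg, abs_mul, abs_of_nonneg hsnn]
  have hsum : |∑ j, ∑ k, p.1 j * p.2 k * Jint (B j k) z (s • p.1) (-((s*s) • p.2))|
      ≤ R^2 * ∑ j, ∑ k, C j k := by
    calc |∑ j, ∑ k, p.1 j * p.2 k * Jint (B j k) z (s • p.1) (-((s*s) • p.2))|
        ≤ ∑ j, ∑ k, |p.1 j * p.2 k * Jint (B j k) z (s • p.1) (-((s*s) • p.2))| := by
          refine le_trans (Finset.abs_sum_le_sum_abs _ _) ?_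
          exact Finset.sum_le_sum fun j _ => Finset.abs_sum_le_sum_abs _ _
      _ ≤ ∑ j, ∑ k, R * R * C j k := by
          refine Finset.sum_le_sum fun j _ => Finset.sum_le_sum fun k _ => ?_
          rw [abs_mul, abs_mul]
          have h1 : |p.1 j| ≤ R := le_trans (norm_le_pi_norm p.1 j) hx
          have h2 : |p.2 k| ≤ R := le_trans (norm_le_pi_norm p.2 k) hy
          have h3 : |Jint (B j k) z (s • p.1) (-((s*s) • p.2))| ≤ C j k :=
            Jint_bound _ _ _ _ _ (fun μ ν _ _ => hC j k _)
          exact mul_le_mul (mul_le_mul h1 h2 (abs_nonneg _) hRnn) h3 (abs_nonneg _)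
            (by positivity)
      _ = R^2 * ∑ j, ∑ k, C j k := by
          rw [Finset.mul_sum]
          refine Finset.sum_congr rfl fun j _ => ?_
          rw [Finset.mul_sum]
          refine Finset.sum_congr rfl fun k _ => ?_
          ring
  calc s * |∑ j, ∑ k, p.1 j * p.2 k * Jint (B j k) z (s • p.1) (-((s*s) • p.2))|
      ≤ s * D := by
        rw [hDdef]
        exact mul_le_mul_of_nonneg_left hsum hsnn
    _ < ε := by
        have h1 : s * (D+1) < ε := by
          rw [← lt_div_iff₀ (by positivity : (0:ℝ) < D+1)]
          exact hslt
        nlinarith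

/-- Locally uniform limits of the magnetic phase factor
`φ_ℏ(z;x,y) = e^{-(i/ℏ)Γ^B⟨z, z+√ℏ x, z+√ℏ(x-y)⟩}` as `ℏ → 0⁺`. -/
theorem phase_factor_limits {N : ℕ} (B : Fin N → Fin N → Vec N → ℝ)
    (hBanti : ∀ j k x, B j k x = - B k j x)
    (hBcont : ∀ j k, Continuous (B j k))
    (hBbound : ∀ j k, ∃ C : ℝ, ∀ x, |B j k x| ≤ C)
    (z : Vec N) :
    TendstoLocallyUniformly
      (fun (ℏ : ℝ) (p : Vec N × Vec N) =>
        Complex.exp (-(Complex.I/(ℏ:ℂ)) *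
          ((fluxB B z (z + Real.sqrt ℏ • p.1) (z + Real.sqrt ℏ • (p.1 - p.2)) : ℝ) : ℂ)))
      (fun p : Vec N × Vec N =>
        Complex.exp (Complex.I/2 * ((∑ j, ∑ k, p.1 j * p.2 k * B j k z : ℝ) : ℂ)))
      (𝓝[>] 0)
    ∧
    TendstoLocallyUniformly
      (fun (ℏ : ℝ) (p : Vec N × Vec N) =>
        Complex.exp (-(Complex.I/(ℏ:ℂ)) *
          ((fluxB B z (z + Real.sqrt ℏ • p.1)
            (z + Real.sqrt ℏ • (p.1 - Real.sqrt ℏ • p.2)) : ℝ) : ℂ)))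
      (fun _ : Vec N × Vec N => 1)
      (𝓝[>] 0) := by
  constructor
  · rw [tendstoLocallyUniformly_iff_forall_isCompact]
    intro K hK
    have e1 : (fun (ℏ : ℝ) (p : Vec N × Vec N) =>
        Complex.exp (-(Complex.I/(ℏ:ℂ)) *
          ((fluxB B z (z + Real.sqrt ℏ • p.1) (z + Real.sqrt ℏ • (p.1 - p.2)) : ℝ) : ℂ)))
        = fun (ℏ : ℝ) (p : Vec N × Vec N) =>
          Complex.exp (((-(fluxB B z (z + Real.sqrt ℏ • p.1)
            (z + Real.sqrt ℏ • (p.1 - p.2))) / ℏ : ℝ) : ℂ) * Complex.I) := by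
      funext ℏ p
      congr 1
      push_cast
      ring
    have e2 : (fun p : Vec N × Vec N =>
        Complex.exp (Complex.I/2 * ((∑ j, ∑ k, p.1 j * p.2 k * B j k z : ℝ) : ℂ)))
        = fun p : Vec N × Vec N =>
          Complex.exp ((((∑ j, ∑ k, p.1 j * p.2 k * B j k z) / 2 : ℝ) : ℂ) * Complex.I) := by
      funext p
      congr 1
      push_cast
      ring
    rw [e1, e2]
    exact tuo_exp (branch1 B hBcont z K hK)
  · rw [tendstoLocallyUniformly_iff_forall_isCompact]
    intro K hK
    have e1 : (fun (ℏ : ℝ) (p : Vec N × Vec N) =>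
        Complex.exp (-(Complex.I/(ℏ:ℂ)) *
          ((fluxB B z (z + Real.sqrt ℏ • p.1)
            (z + Real.sqrt ℏ • (p.1 - Real.sqrt ℏ • p.2)) : ℝ) : ℂ)))
        = fun (ℏ : ℝ) (p : Vec N × Vec N) =>
          Complex.exp (((-(fluxB B z (z + Real.sqrt ℏ • p.1)
            (z + Real.sqrt ℏ • (p.1 - Real.sqrt ℏ • p.2))) / ℏ : ℝ) : ℂ) * Complex.I) := by
      funext ℏ p
      congr 1
      push_cast
      ring
    have e2 : (fun _ : Vec N × Vec N => (1:ℂ))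
        = fun _ : Vec N × Vec N => Complex.exp (((0:ℝ) : ℂ) * Complex.I) := by
      funext p
      simp
    rw [e1, e2]
    exact tuo_exp (branch2 B hBbound z K hK)

end
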